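/- Let (e_i) be a 1-unconditional and Δ-bidemocratic basis of a Banach space X with fundamental function φ. Then |||x||| = max{ ‖x‖, sup_{A ⊂ ℕ finite} (φ(|A|)/|A|) Σ_{i∈A} |e_i^*(x)| } defines an equivalent norm on X, and with respect to |||·||| the basis (e_i) is 1-unconditional and 1-bidemocratic; in particular (e_i) and (e_i^*) are 1-democratic and (e_i) is 2-greedy. -/

import Mathlib

set_option linter.unusedSectionVars false
set_option maxHeartbeats 1000000


open scoped BigOperators

section CommonDefs

variable {X : Type*} [NormedAddCommGroup X] [NormedSpace ℝ X]

/-- `(e, coord)` is a Schauder basis of `X` with biorthogonal functionals `coord`: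
the functionals are biorthogonal to the basis vectors and every `x` is the limit of the
partial sums of its expansion `Σ coord i x • e i`. -/
structure IsSchauderBasis (e : ℕ → X) (coord : ℕ → X →L[ℝ] ℝ) : Prop where
  biorth : ∀ i j, coord i (e j) = if i = j then 1 else 0
  expansion : ∀ x : X,
    Filter.Tendsto (fun n => ∑ i ∈ Finset.range n, coord i x • e i)
      Filter.atTop (nhds x)

/-- The best `m`-term approximation error `σ_m(x)` w.r.t. the norm `nn`. -/
noncomputable def bestApprox (e : ℕ → X) (nn : X → ℝ) (m : ℕ) (x : X) : ℝ :=
  sInf { r | ∃ (A : Finset ℕ) (a : ℕ → ℝ), A.card ≤ m ∧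
    r = nn (x - ∑ i ∈ A, a i • e i) }

/-- `A` is a set of coordinates of `x` of largest modulus (a greedy set):
the `m`-th greedy approximant of `x` is `∑ i ∈ A, coord i x • e i` for a greedy set of
cardinality `m`. -/
def GreedySet (coord : ℕ → X →L[ℝ] ℝ) (x : X) (A : Finset ℕ) : Prop :=
  ∀ i ∈ A, ∀ j ∉ A, |coord j x| ≤ |coord i x|

/-- The basis `(e, coord)` is `C`-greedy w.r.t. the norm `nn`:
`‖x - G_m(x)‖ ≤ C σ_m(x)` for every `x` and `m` (for any choice of `m`-th greedy
approximant `G_m(x)`). -/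
def IsGreedyWith (e : ℕ → X) (coord : ℕ → X →L[ℝ] ℝ) (nn : X → ℝ) (C : ℝ) : Prop :=
  ∀ (x : X) (m : ℕ) (A : Finset ℕ), A.card = m → GreedySet coord x A →
    nn (x - ∑ i ∈ A, coord i x • e i) ≤ C * bestApprox e nn m x

/-- Suppression `K`-unconditionality w.r.t. the norm `nn`. -/
def IsSuppressionUnconditionalWith (e : ℕ → X) (nn : X → ℝ) (K : ℝ) : Prop :=
  ∀ (s A : Finset ℕ) (a : ℕ → ℝ), A ⊆ s →
    nn (∑ i ∈ A, a i • e i) ≤ K * nn (∑ i ∈ s, a i • e i)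

/-- `K`-unconditionality w.r.t. the norm `nn`. -/
def IsUnconditionalWith (e : ℕ → X) (nn : X → ℝ) (K : ℝ) : Prop :=
  ∀ (s : Finset ℕ) (a b : ℕ → ℝ), (∀ i, |a i| ≤ |b i|) →
    nn (∑ i ∈ s, a i • e i) ≤ K * nn (∑ i ∈ s, b i • e i)

/-- `Δ`-democracy w.r.t. the norm `nn`. -/
def IsDemocraticWith (e : ℕ → X) (nn : X → ℝ) (Δ : ℝ) : Prop :=
  ∀ A B : Finset ℕ, A.card ≤ B.card →
    nn (∑ i ∈ A, e i) ≤ Δ * nn (∑ i ∈ B, e i)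

/-- The basis is normalized w.r.t. the norm `nn`. -/
def IsNormalizedWith (e : ℕ → X) (nn : X → ℝ) : Prop :=
  ∀ i, nn (e i) = 1

/-- The basis is seminormalized. -/
def IsSeminormalized (e : ℕ → X) : Prop :=
  ∃ c C : ℝ, 0 < c ∧ ∀ i, c ≤ ‖e i‖ ∧ ‖e i‖ ≤ C

/-- The fundamental function `φ(n) = sup_{|A| ≤ n} ‖Σ_{i∈A} e_i‖` w.r.t. the norm `nn`. -/
noncomputable def fundFn (e : ℕ → X) (nn : X → ℝ) (n : ℕ) : ℝ :=
  sSup { r | ∃ A : Finset ℕ, A.card ≤ n ∧ r = nn (∑ i ∈ A, e i) }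

/-- The dual norm (w.r.t. `nn`) of `∑_{i∈A} e_i^*`. -/
noncomputable def dualNormFinset (coord : ℕ → X →L[ℝ] ℝ) (nn : X → ℝ) (A : Finset ℕ) : ℝ :=
  sSup { r | ∃ x : X, nn x ≤ 1 ∧ r = |∑ i ∈ A, coord i x| }

/-- The dual fundamental function `φ*(n) = sup_{|A| ≤ n} ‖Σ_{i∈A} e_i^*‖*` w.r.t. `nn`. -/
noncomputable def dualFundFn (coord : ℕ → X →L[ℝ] ℝ) (nn : X → ℝ) (n : ℕ) : ℝ :=
  sSup { r | ∃ A : Finset ℕ, A.card ≤ n ∧ r = dualNormFinset coord nn A }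

/-- `Δ`-bidemocracy w.r.t. the norm `nn`: `φ(n) φ*(n) ≤ Δ n` for all `n`. -/
def IsBidemocraticWith (e : ℕ → X) (coord : ℕ → X →L[ℝ] ℝ) (nn : X → ℝ) (Δ : ℝ) : Prop :=
  ∀ n : ℕ, fundFn e nn n * dualFundFn coord nn n ≤ Δ * n

/-- `nn` is a norm on `X` equivalent to the original norm. -/
def IsEquivNorm (nn : X → ℝ) : Prop :=
  (∀ x y : X, nn (x + y) ≤ nn x + nn y) ∧
  (∀ (a : ℝ) (x : X), nn (a • x) = |a| * nn x) ∧
  ∃ c C : ℝ, 0 < c ∧ ∀ x : X, c * ‖x‖ ≤ nn x ∧ nn x ≤ C * ‖x‖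

/-- The (finitely supported) vector `Σ_i f i • e i` with coefficients `f ∈ c₀₀`. -/
noncomputable def finVec (e : ℕ → X) (f : ℕ →₀ ℝ) : X :=
  f.sum fun i c => c • e i

/-- `y = w + t` is a greedy rearrangement of `x = w + u`: the coefficient sequences
`w, u, t` have pairwise disjoint supports, `|supp u| = |supp t|`, and
`‖w‖_∞ ≤ |u_i| = |t_j|` for all `i ∈ supp u`, `j ∈ supp t`. -/
def IsGreedyRearrangement (w u t : ℕ →₀ ℝ) : Prop :=
  Disjoint w.support u.support ∧ Disjoint w.support t.support ∧
  Disjoint u.support t.support ∧ u.support.card = t.support.card ∧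
  (∀ i ∈ u.support, ∀ j ∈ t.support, |u i| = |t j|) ∧
  (∀ n : ℕ, ∀ i ∈ u.support, |w n| ≤ |u i|)

end CommonDefs

section FundDefs

/-- A fundamental (quasi-concave) function on `[1, ∞)`: positive, increasing, and
`x ↦ φ(x)/x` is decreasing. -/
def IsFundamentalFunction (φ : ℝ → ℝ) : Prop :=
  (∀ x : ℝ, 1 ≤ x → 0 < φ x) ∧
  (∀ x y : ℝ, 1 ≤ x → x ≤ y → φ x ≤ φ y) ∧
  (∀ x y : ℝ, 1 ≤ x → x ≤ y → φ y / y ≤ φ x / x)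

/-- `δ_φ(y) = liminf_{x→∞} φ(yx)/(y φ(x))`. -/
noncomputable def deltaFn (φ : ℝ → ℝ) (y : ℝ) : ℝ :=
  Filter.liminf (fun x : ℝ => φ (y * x) / (y * φ x)) Filter.atTop

/-- `δ(φ) = inf_{y ≥ 1} δ_φ(y)`. -/
noncomputable def deltaParam (φ : ℝ → ℝ) : ℝ :=
  sInf { d | ∃ y : ℝ, 1 ≤ y ∧ d = deltaFn φ y }

/-- Equivalence of fundamental functions. -/
def FundEquiv (φ ψ : ℝ → ℝ) : Prop :=
  ∃ a b : ℝ, 0 < a ∧ 0 < b ∧ ∀ x : ℝ, 1 ≤ x → a * φ x ≤ ψ x ∧ ψ x ≤ b * φ x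

end FundDefs

section Aux
open Finset Filter

theorem count_mem_powersetCard (A : Finset ℕ) (i : ℕ) (hi : i ∈ A) (k : ℕ) (hk : 1 ≤ k) :
    ((A.powersetCard k).filter (fun B => i ∈ B)).card = (A.card - 1).choose (k-1) := by
  rw [show A.card - 1 = (A.erase i).card from (card_erase_of_mem hi).symm,
    ← Finset.card_powersetCard (k-1) (A.erase i)]
  apply Finset.card_bij' (fun B _ => B.erase i) (fun C _ => insert i C)
  · intro B hB
    simp only [mem_filter] at hB
    exact insert_erase hB.2
  · intro C hC
    simp only [mem_powersetCard] at hC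
    have hiC : i ∉ C := fun h => (mem_erase.1 (hC.1 h)).1 rfl
    exact erase_insert hiC
  · intro B hB
    simp only [mem_filter, mem_powersetCard] at hB
    simp only [mem_powersetCard]
    exact ⟨erase_subset_erase _ hB.1.1, by rw [card_erase_of_mem hB.2, hB.1.2]⟩
  · intro C hC
    simp only [mem_powersetCard] at hC
    have hiC : i ∉ C := fun h => (mem_erase.1 (hC.1 h)).1 rfl
    simp only [mem_filter, mem_powersetCard]
    refine ⟨⟨?_, ?_⟩, mem_insert_self _ _⟩
    · intro j hj
      rcases mem_insert.1 hj with rfl | hj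
      · exact hi
      · exact (erase_subset _ _) (hC.1 hj)
    · rw [card_insert_of_notMem hiC, hC.2, Nat.sub_add_cancel hk]

theorem sum_powersetCard_smul {X : Type*} [AddCommMonoid X] (A : Finset ℕ) (k : ℕ) (hk : 1 ≤ k)
    (f : ℕ → X) :
    ∑ B ∈ A.powersetCard k, ∑ j ∈ B, f j = ((A.card - 1).choose (k-1)) • ∑ j ∈ A, f j := by
  calc ∑ B ∈ A.powersetCard k, ∑ j ∈ B, f j
      = ∑ B ∈ A.powersetCard k, ∑ j ∈ A, if j ∈ B then f j else 0 := by
        refine Finset.sum_congr rfl fun B hB => ?_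
        rw [Finset.sum_ite_mem, Finset.inter_eq_right.2 (Finset.mem_powersetCard.1 hB).1]
    _ = ∑ j ∈ A, ∑ B ∈ A.powersetCard k, if j ∈ B then f j else 0 := Finset.sum_comm
    _ = ∑ j ∈ A, ((A.powersetCard k).filter (fun B => j ∈ B)).card • f j := by
        refine Finset.sum_congr rfl fun j hj => ?_
        rw [← Finset.sum_filter, Finset.sum_const]
    _ = ∑ j ∈ A, ((A.card - 1).choose (k-1)) • f j := by
        refine Finset.sum_congr rfl fun j hj => ?_
        rw [count_mem_powersetCard A j hj k hk]
    _ = ((A.card - 1).choose (k-1)) • ∑ j ∈ A, f j := (Finset.smul_sum).symm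

section
variable {X : Type*} [NormedAddCommGroup X] [NormedSpace ℝ X]

/-- the defining set of `fundFn` for the original norm -/
def phiSet (e : ℕ → X) (n : ℕ) : Set ℝ := { r | ∃ A : Finset ℕ, A.card ≤ n ∧ r = ‖∑ i ∈ A, e i‖ }


theorem phiSet_nonempty (e : ℕ → X) (n : ℕ) : (phiSet e n).Nonempty :=
  ⟨‖(0:X)‖, ∅, by simp⟩

theorem phiSet_bddAbove (e : ℕ → X) {C : ℝ} (hC : ∀ i, ‖e i‖ ≤ C) (hC0 : 0 ≤ C) (n : ℕ) :
    BddAbove (phiSet e n) := by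
  refine ⟨n * C, fun r hr => ?_⟩
  obtain ⟨A, hA, rfl⟩ := hr
  calc ‖∑ i ∈ A, e i‖ ≤ ∑ i ∈ A, ‖e i‖ := norm_sum_le _ _
    _ ≤ A.card • C := Finset.sum_le_card_nsmul _ _ _ (fun i _ => hC i)
    _ = (A.card : ℝ) * C := nsmul_eq_mul _ _
    _ ≤ n * C := by
        exact mul_le_mul_of_nonneg_right (by exact_mod_cast hA) hC0

theorem norm_sum_le_phi (e : ℕ → X) {C : ℝ} (hC : ∀ i, ‖e i‖ ≤ C) (hC0 : 0 ≤ C)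
    {A : Finset ℕ} {n : ℕ} (hA : A.card ≤ n) :
    ‖∑ i ∈ A, e i‖ ≤ fundFn e (fun z => ‖z‖) n :=
  le_csSup (phiSet_bddAbove e hC hC0 n) ⟨A, hA, rfl⟩

theorem phi_nonneg (e : ℕ → X) {C : ℝ} (hC : ∀ i, ‖e i‖ ≤ C) (hC0 : 0 ≤ C) (n : ℕ) :
    0 ≤ fundFn e (fun z => ‖z‖) n := by
  have := norm_sum_le_phi e hC hC0 (A := ∅) (n := n) (by simp)
  simpa using this.trans' (norm_nonneg _)

theorem phi_mono (e : ℕ → X) {C : ℝ} (hC : ∀ i, ‖e i‖ ≤ C) (hC0 : 0 ≤ C)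
    {m n : ℕ} (h : m ≤ n) :
    fundFn e (fun z => ‖z‖) m ≤ fundFn e (fun z => ‖z‖) n := by
  apply csSup_le (phiSet_nonempty e m)
  rintro r ⟨A, hA, rfl⟩
  exact norm_sum_le_phi e hC hC0 (hA.trans h)

theorem phi_pos (e : ℕ → X) {c C : ℝ} (hc : 0 < c) (hce : ∀ i, c ≤ ‖e i‖)
    (hC : ∀ i, ‖e i‖ ≤ C) (hC0 : 0 ≤ C) {n : ℕ} (hn : 1 ≤ n) :
    0 < fundFn e (fun z => ‖z‖) n := by
  have h0 : ‖∑ i ∈ ({0} : Finset ℕ), e i‖ ≤ fundFn e (fun z => ‖z‖) n :=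
    norm_sum_le_phi e hC hC0 (by simpa using hn)
  simp only [Finset.sum_singleton] at h0
  exact lt_of_lt_of_le (lt_of_lt_of_le hc (hce 0)) h0

/-- quasi-concavity: `k ≤ m → k φ(m) ≤ m φ(k)` -/
theorem phi_quasi (e : ℕ → X) {C : ℝ} (hC : ∀ i, ‖e i‖ ≤ C) (hC0 : 0 ≤ C)
    {k m : ℕ} (hk : 1 ≤ k) (hkm : k ≤ m) :
    (k : ℝ) * fundFn e (fun z => ‖z‖) m ≤ (m : ℝ) * fundFn e (fun z => ‖z‖) k := by
  set φ := fundFn e (fun z => ‖z‖) with hφ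
  -- first: for any A with A.card ≤ m, k * ‖Σ_A e‖ ≤ m * φ k
  have key : ∀ A : Finset ℕ, A.card ≤ m → (k:ℝ) * ‖∑ i ∈ A, e i‖ ≤ (m:ℝ) * φ k := by
    intro A hAm
    by_cases hAk : A.card ≤ k
    · have h1 : ‖∑ i ∈ A, e i‖ ≤ φ k := norm_sum_le_phi e hC hC0 hAk
      calc (k:ℝ) * ‖∑ i ∈ A, e i‖ ≤ (k:ℝ) * φ k :=
            mul_le_mul_of_nonneg_left h1 (by positivity)
        _ ≤ (m:ℝ) * φ k :=
            mul_le_mul_of_nonneg_right (by exact_mod_cast hkm) (phi_nonneg e hC hC0 k)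
    · push_neg at hAk
      -- averaging over subsets of size k
      have havg := sum_powersetCard_smul A k hk e
      have hbin : ((A.card - 1).choose (k-1) : ℝ) * ‖∑ i ∈ A, e i‖ ≤ (A.card.choose k) * φ k := by
        calc ((A.card - 1).choose (k-1) : ℝ) * ‖∑ i ∈ A, e i‖
            = ‖((A.card - 1).choose (k-1)) • ∑ i ∈ A, e i‖ := by
              rw [← Nat.cast_smul_eq_nsmul ℝ, norm_smul, Real.norm_natCast]
          _ = ‖∑ B ∈ A.powersetCard k, ∑ j ∈ B, e j‖ := by rw [havg]
          _ ≤ ∑ B ∈ A.powersetCard k, ‖∑ j ∈ B, e j‖ := norm_sum_le _ _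
          _ ≤ (A.powersetCard k).card • φ k := by
              apply Finset.sum_le_card_nsmul
              intro B hB
              exact norm_sum_le_phi e hC hC0 (le_of_eq (Finset.mem_powersetCard.1 hB).2)
          _ = (A.card.choose k : ℝ) * φ k := by rw [Finset.card_powersetCard, nsmul_eq_mul]
      -- identity: k * choose (A.card) k = A.card * choose (A.card - 1) (k-1)
      have hid : k * A.card.choose k = A.card * (A.card - 1).choose (k-1) := by
        have := Nat.add_one_mul_choose_eq (A.card - 1) (k - 1)
        rw [Nat.sub_add_cancel (hk.trans hAk.le), Nat.sub_add_cancel hk] at this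
        rw [this, Nat.mul_comm]
      have hchoosepos : (0:ℝ) < A.card.choose k := by
        exact_mod_cast Nat.choose_pos hAk.le
      -- k * ‖Σ_A e‖ ≤ A.card * φ k  (multiply hbin by k / choose)
      have hidR : (k:ℝ) * (A.card.choose k) = (A.card:ℝ) * ((A.card-1).choose (k-1)) := by
        exact_mod_cast hid
      have h2 : (k:ℝ) * ‖∑ i ∈ A, e i‖ ≤ (A.card:ℝ) * φ k := by
        rw [← mul_le_mul_iff_left₀ hchoosepos]
        calc (k:ℝ) * ‖∑ i ∈ A, e i‖ * (A.card.choose k)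
            = ((k:ℝ) * (A.card.choose k)) * ‖∑ i ∈ A, e i‖ := by ring
          _ = ((A.card:ℝ) * ((A.card-1).choose (k-1))) * ‖∑ i ∈ A, e i‖ := by rw [hidR]
          _ = (A.card:ℝ) * (((A.card-1).choose (k-1) : ℝ) * ‖∑ i ∈ A, e i‖) := by ring
          _ ≤ (A.card:ℝ) * ((A.card.choose k) * φ k) :=
              mul_le_mul_of_nonneg_left hbin (by positivity)
          _ = (A.card:ℝ) * φ k * (A.card.choose k) := by ring
      exact h2.trans (mul_le_mul_of_nonneg_right (by exact_mod_cast hAm) (phi_nonneg e hC hC0 k))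
  -- now take sup over A
  have : φ m ≤ (m:ℝ) * φ k / k := by
    apply csSup_le (phiSet_nonempty e m)
    rintro r ⟨A, hA, rfl⟩
    rw [le_div_iff₀ (by positivity : (0:ℝ) < (k:ℝ))]
    calc ‖∑ i ∈ A, e i‖ * k = (k:ℝ) * ‖∑ i ∈ A, e i‖ := by ring
      _ ≤ (m:ℝ) * φ k := key A hA
  calc (k:ℝ) * φ m ≤ (k:ℝ) * ((m:ℝ) * φ k / k) :=
        mul_le_mul_of_nonneg_left this (by positivity)
    _ = (m:ℝ) * φ k := by field_simp

end

end Aux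

section Aux3
open Finset Filter
variable {X : Type*} [NormedAddCommGroup X] [NormedSpace ℝ X]

theorem coord_bound [CompleteSpace X] (e : ℕ → X) (coord : ℕ → X →L[ℝ] ℝ)
    (hbasis : IsSchauderBasis e coord) {c C : ℝ} (hc : 0 < c)
    (hce : ∀ i, c ≤ ‖e i‖ ∧ ‖e i‖ ≤ C) :
    ∃ M : ℝ, 0 ≤ M ∧ ∀ i, ‖coord i‖ ≤ M := by
  have h : ∀ x : X, ∃ K, ∀ i : ℕ, ‖coord i x‖ ≤ K := by
    intro x
    obtain ⟨K, hK⟩ := ((hbasis.expansion x).norm).bddAbove_range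
    simp only [mem_upperBounds, Set.mem_range, forall_exists_index] at hK
    refine ⟨2 * K / c, fun i => ?_⟩
    have hKn : ∀ n, ‖∑ j ∈ Finset.range n, coord j x • e j‖ ≤ K := fun n => hK _ n rfl
    have hsplit : coord i x • e i =
        (∑ j ∈ Finset.range (i+1), coord j x • e j) - (∑ j ∈ Finset.range i, coord j x • e j) := by
      rw [Finset.sum_range_succ]; abel
    have h2 : ‖coord i x‖ * ‖e i‖ ≤ 2 * K := by
      have : ‖coord i x • e i‖ ≤ 2 * K := by
        rw [hsplit]
        calc ‖_ - _‖ ≤ ‖∑ j ∈ Finset.range (i+1), coord j x • e j‖ +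
              ‖∑ j ∈ Finset.range i, coord j x • e j‖ := norm_sub_le _ _
          _ ≤ K + K := add_le_add (hKn _) (hKn _)
          _ = 2 * K := by ring
      rwa [norm_smul] at this
    have h3 : ‖coord i x‖ * c ≤ 2 * K :=
      le_trans (mul_le_mul_of_nonneg_left (hce i).1 (norm_nonneg _)) h2
    rw [le_div_iff₀ hc]
    exact h3
  obtain ⟨M, hM⟩ := banach_steinhaus h
  exact ⟨max M 0, le_max_right _ _, fun i => (hM i).trans (le_max_left _ _)⟩

theorem dualNormFinset_le_mul (coord : ℕ → X →L[ℝ] ℝ) {M : ℝ} (hM : ∀ i, ‖coord i‖ ≤ M)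
    (nn : X → ℝ) (hnn : ∀ x : X, nn x ≤ 1 → ‖x‖ ≤ 1) (h0 : nn 0 ≤ 1) (A : Finset ℕ) :
    dualNormFinset coord nn A ≤ A.card * M := by
  unfold dualNormFinset
  have hne : {r | ∃ x : X, nn x ≤ 1 ∧ r = |∑ i ∈ A, coord i x|}.Nonempty := ⟨_, 0, h0, rfl⟩
  apply csSup_le hne
  rintro r ⟨x, hx, rfl⟩
  calc |∑ i ∈ A, coord i x| ≤ ∑ i ∈ A, |coord i x| := Finset.abs_sum_le_sum_abs _ _
    _ ≤ ∑ i ∈ A, M := by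
        refine Finset.sum_le_sum fun i _ => ?_
        calc |coord i x| ≤ ‖coord i‖ * ‖x‖ := (coord i).le_opNorm x
          _ ≤ M * 1 :=
              mul_le_mul (hM i) (hnn x hx) (norm_nonneg _)
                ((ContinuousLinearMap.opNorm_nonneg _).trans (hM i))
          _ = M := mul_one M
    _ = A.card * M := by rw [Finset.sum_const, nsmul_eq_mul]

theorem dualNormFinset_bddAbove (coord : ℕ → X →L[ℝ] ℝ) {M : ℝ} (hM : ∀ i, ‖coord i‖ ≤ M)
    (nn : X → ℝ) (hnn : ∀ x : X, nn x ≤ 1 → ‖x‖ ≤ 1) (A : Finset ℕ) :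
    BddAbove { r | ∃ x : X, nn x ≤ 1 ∧ r = |∑ i ∈ A, coord i x| } := by
  refine ⟨A.card * M, ?_⟩
  rintro r ⟨x, hx, rfl⟩
  calc |∑ i ∈ A, coord i x| ≤ ∑ i ∈ A, |coord i x| := Finset.abs_sum_le_sum_abs _ _
    _ ≤ ∑ i ∈ A, M := by
        refine Finset.sum_le_sum fun i _ => ?_
        calc |coord i x| ≤ ‖coord i‖ * ‖x‖ := (coord i).le_opNorm x
          _ ≤ M * 1 :=
              mul_le_mul (hM i) (hnn x hx) (norm_nonneg _)
                ((ContinuousLinearMap.opNorm_nonneg _).trans (hM i))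
          _ = M := mul_one M
    _ = A.card * M := by rw [Finset.sum_const, nsmul_eq_mul]

theorem dualNormFinset_nonneg (coord : ℕ → X →L[ℝ] ℝ) (nn : X → ℝ) (h0 : nn 0 ≤ 1)
    (A : Finset ℕ)
    (hbdd : BddAbove { r | ∃ x : X, nn x ≤ 1 ∧ r = |∑ i ∈ A, coord i x| }) :
    0 ≤ dualNormFinset coord nn A := by
  unfold dualNormFinset
  exact le_csSup hbdd ⟨0, h0, by simp⟩

theorem sum_abs_coord_le [CompleteSpace X] (e : ℕ → X) (coord : ℕ → X →L[ℝ] ℝ)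
    (hbasis : IsSchauderBasis e coord)
    (huncond : IsUnconditionalWith e (fun x => ‖x‖) 1)
    {M : ℝ} (hM : ∀ i, ‖coord i‖ ≤ M) (x : X) (A : Finset ℕ) :
    ∑ i ∈ A, |coord i x| ≤ dualNormFinset coord (fun z => ‖z‖) A * ‖x‖ := by
  classical
  have hbdd := dualNormFinset_bddAbove coord hM (fun z => ‖z‖) (fun z hz => hz) A
  have hdnn : 0 ≤ dualNormFinset coord (fun z => ‖z‖) A :=
    dualNormFinset_nonneg coord (fun z => ‖z‖) (by simp) A hbdd
  set ε : ℕ → ℝ := fun i => if coord i x < 0 then -1 else 1 with hε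
  have hεabs : ∀ i, ε i * coord i x = |coord i x| := by
    intro i
    by_cases h : coord i x < 0
    · simp [hε, h, abs_of_neg h]
    · simp [hε, h, abs_of_nonneg (not_lt.1 h)]
  have hεnorm : ∀ i, |ε i * coord i x| ≤ |coord i x| := by
    intro i; rw [hεabs]; rw [abs_abs]
  set T : ℕ → X := fun n => ∑ i ∈ Finset.range n, (ε i * coord i x) • e i with hT
  set Sq : ℕ → X := fun n => ∑ i ∈ Finset.range n, coord i x • e i with hSq
  have hS : Filter.Tendsto Sq Filter.atTop (nhds x) := hbasis.expansion x
  have hdiff : ∀ m n : ℕ, m ≤ n → ‖T n - T m‖ ≤ ‖Sq n - Sq m‖ := by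
    intro m n h
    have hsub : Finset.range m ⊆ Finset.range n := Finset.range_subset_range.2 h
    have e1 : ∑ i ∈ Finset.range n \ Finset.range m, (ε i * coord i x) • e i = T n - T m :=
      Finset.sum_sdiff_eq_sub hsub
    have e2 : ∑ i ∈ Finset.range n \ Finset.range m, coord i x • e i = Sq n - Sq m :=
      Finset.sum_sdiff_eq_sub hsub
    rw [← e1, ← e2]
    simpa using huncond (Finset.range n \ Finset.range m)
      (fun i => ε i * coord i x) (fun i => coord i x) hεnorm
  have hTcauchy : CauchySeq T := by
    have hScauchy : CauchySeq Sq := hS.cauchySeq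
    rw [Metric.cauchySeq_iff] at hScauchy ⊢
    intro δ hδ
    obtain ⟨N, hN⟩ := hScauchy δ hδ
    refine ⟨N, fun m hm n hn => ?_⟩
    rcases le_total m n with h | h
    · calc dist (T m) (T n) = ‖T n - T m‖ := by rw [dist_eq_norm']
        _ ≤ ‖Sq n - Sq m‖ := hdiff m n h
        _ = dist (Sq m) (Sq n) := (dist_eq_norm' _ _).symm
        _ < δ := hN m hm n hn
    · calc dist (T m) (T n) = ‖T m - T n‖ := by rw [dist_eq_norm]
        _ ≤ ‖Sq m - Sq n‖ := hdiff n m h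
        _ = dist (Sq m) (Sq n) := (dist_eq_norm _ _).symm
        _ < δ := hN m hm n hn
  obtain ⟨y, hy⟩ := cauchySeq_tendsto_of_complete hTcauchy
  have hynorm : ‖y‖ ≤ ‖x‖ := by
    refine le_of_tendsto_of_tendsto' hy.norm hS.norm fun n => ?_
    simpa using huncond (Finset.range n) (fun i => ε i * coord i x) (fun i => coord i x) hεnorm
  have hcoordy : ∀ j, coord j y = ε j * coord j x := by
    intro j
    have h1 : Filter.Tendsto (fun n => coord j (T n)) Filter.atTop (nhds (coord j y)) :=
      ((coord j).continuous.tendsto y).comp hy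
    have h2 : ∀ n : ℕ, j < n → coord j (T n) = ε j * coord j x := by
      intro n hn
      rw [hT]
      simp only [map_sum, map_smul, smul_eq_mul, hbasis.biorth, mul_ite, mul_one, mul_zero]
      rw [Finset.sum_ite_eq (Finset.range n) j (fun i => ε i * coord i x)]
      simp [Finset.mem_range.2 hn]
    have h3 : Filter.Tendsto (fun n => coord j (T n)) Filter.atTop (nhds (ε j * coord j x)) := by
      refine Filter.Tendsto.congr' ?_ tendsto_const_nhds
      filter_upwards [Filter.eventually_gt_atTop j] with n hn
      exact (h2 n hn).symm
    exact tendsto_nhds_unique h1 h3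
  have hsum : ∑ i ∈ A, |coord i x| = ∑ i ∈ A, coord i y :=
    Finset.sum_congr rfl fun i _ => by rw [hcoordy i, hεabs i]
  rcases eq_or_ne y 0 with hy0 | hy0
  · rw [hsum, hy0]
    simp only [map_zero, Finset.sum_const_zero]
    positivity
  · set z := ‖y‖⁻¹ • y with hz
    have hzn : ‖z‖ ≤ 1 := by
      rw [hz, norm_smul, norm_inv, norm_norm, inv_mul_cancel₀ (norm_ne_zero_iff.2 hy0)]
    have hmem : |∑ i ∈ A, coord i z| ∈
        { r | ∃ w : X, ‖w‖ ≤ 1 ∧ r = |∑ i ∈ A, coord i w| } := ⟨z, hzn, rfl⟩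
    have h4 : |∑ i ∈ A, coord i z| ≤ dualNormFinset coord (fun z => ‖z‖) A :=
      le_csSup hbdd hmem
    have h5 : ∑ i ∈ A, coord i z = ‖y‖⁻¹ * ∑ i ∈ A, coord i y := by
      rw [Finset.mul_sum]
      exact Finset.sum_congr rfl fun i _ => by rw [hz, map_smul, smul_eq_mul]
    have hsnn : 0 ≤ ∑ i ∈ A, coord i y := by
      rw [← hsum]; positivity
    have hyn : 0 < ‖y‖ := norm_pos_iff.2 hy0
    rw [hsum]
    have h6 : |∑ i ∈ A, coord i z| = ‖y‖⁻¹ * ∑ i ∈ A, coord i y := by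
      rw [h5, abs_mul, abs_of_nonneg hsnn, abs_of_nonneg (by positivity : (0:ℝ) ≤ ‖y‖⁻¹)]
    rw [h6] at h4
    calc ∑ i ∈ A, coord i y = ‖y‖ * (‖y‖⁻¹ * ∑ i ∈ A, coord i y) := by field_simp
      _ ≤ ‖y‖ * dualNormFinset coord (fun z => ‖z‖) A :=
          mul_le_mul_of_nonneg_left h4 (norm_nonneg _)
      _ ≤ ‖x‖ * dualNormFinset coord (fun z => ‖z‖) A :=
          mul_le_mul_of_nonneg_right hynorm hdnn
      _ = dualNormFinset coord (fun z => ‖z‖) A * ‖x‖ := mul_comm _ _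

theorem key_bound [CompleteSpace X] (e : ℕ → X) (coord : ℕ → X →L[ℝ] ℝ) (Δ : ℝ)
    (hbasis : IsSchauderBasis e coord)
    (huncond : IsUnconditionalWith e (fun x => ‖x‖) 1)
    (hbidem : IsBidemocraticWith e coord (fun x => ‖x‖) Δ)
    {M : ℝ} (hM : ∀ i, ‖coord i‖ ≤ M)
    {C : ℝ} (hC : ∀ i, ‖e i‖ ≤ C) (hC0 : 0 ≤ C)
    (x : X) (A : Finset ℕ) (hA : A.Nonempty) :
    fundFn e (fun z => ‖z‖) A.card / A.card * ∑ i ∈ A, |coord i x| ≤ Δ * ‖x‖ := by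
  have hn : 0 < A.card := Finset.card_pos.2 hA
  have hnR : (0:ℝ) < A.card := by exact_mod_cast hn
  have h1 := sum_abs_coord_le e coord hbasis huncond hM x A
  have habs : 0 ≤ ∑ i ∈ A, |coord i x| := by positivity
  have hφ : 0 ≤ fundFn e (fun z => ‖z‖) A.card := phi_nonneg e hC hC0 A.card
  -- dualNormFinset ≤ dualFundFn
  have hdbdd : BddAbove { r | ∃ B : Finset ℕ, B.card ≤ A.card ∧
      r = dualNormFinset coord (fun z => ‖z‖) B } := by
    refine ⟨A.card * max M 0, ?_⟩
    rintro r ⟨B, hB, rfl⟩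
    calc dualNormFinset coord (fun z => ‖z‖) B ≤ B.card * max M 0 :=
          dualNormFinset_le_mul coord (fun i => (hM i).trans (le_max_left _ _))
            (fun z => ‖z‖) (fun z hz => hz) (by simp) B
      _ ≤ A.card * max M 0 := by
          refine mul_le_mul_of_nonneg_right ?_ (le_max_right _ _)
          exact_mod_cast hB
  have h2 : dualNormFinset coord (fun z => ‖z‖) A ≤
      dualFundFn coord (fun z => ‖z‖) A.card := by
    unfold dualFundFn
    exact le_csSup hdbdd ⟨A, le_rfl, rfl⟩
  have h3 := hbidem A.card
  have hdnn : 0 ≤ dualNormFinset coord (fun z => ‖z‖) A :=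
    dualNormFinset_nonneg coord (fun z => ‖z‖) (by simp) A
      (dualNormFinset_bddAbove coord hM (fun z => ‖z‖) (fun z hz => hz) A)
  have h4 : ∑ i ∈ A, |coord i x| ≤ dualFundFn coord (fun z => ‖z‖) A.card * ‖x‖ :=
    h1.trans (mul_le_mul_of_nonneg_right h2 (norm_nonneg _))
  calc fundFn e (fun z => ‖z‖) A.card / A.card * ∑ i ∈ A, |coord i x|
      ≤ fundFn e (fun z => ‖z‖) A.card / A.card *
          (dualFundFn coord (fun z => ‖z‖) A.card * ‖x‖) :=
        mul_le_mul_of_nonneg_left h4 (by positivity)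
    _ = (fundFn e (fun z => ‖z‖) A.card * dualFundFn coord (fun z => ‖z‖) A.card) *
          ‖x‖ / A.card := by ring
    _ ≤ (Δ * A.card) * ‖x‖ / A.card := by
        have := mul_le_mul_of_nonneg_right h3 (norm_nonneg x)
        exact div_le_div_of_nonneg_right (by exact this) hnR.le
    _ = Δ * ‖x‖ := by field_simp

/-- the sup part of the new norm -/
noncomputable def Sfun (e : ℕ → X) (coord : ℕ → X →L[ℝ] ℝ) (x : X) : ℝ :=
  sSup { r | ∃ A : Finset ℕ, A.Nonempty ∧
    r = (fundFn e (fun z => ‖z‖) A.card / A.card) * ∑ i ∈ A, |coord i x| }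

section SfunFacts
variable [CompleteSpace X] (e : ℕ → X) (coord : ℕ → X →L[ℝ] ℝ) (Δ : ℝ)
variable (hbasis : IsSchauderBasis e coord)
variable (huncond : IsUnconditionalWith e (fun x => ‖x‖) 1)
variable (hbidem : IsBidemocraticWith e coord (fun x => ‖x‖) Δ)
variable {M : ℝ} (hM : ∀ i, ‖coord i‖ ≤ M)
variable {C : ℝ} (hC : ∀ i, ‖e i‖ ≤ C) (hC0 : 0 ≤ C)

theorem Sfun_nonempty (x : X) :
    Set.Nonempty { r | ∃ A : Finset ℕ, A.Nonempty ∧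
      r = (fundFn e (fun z => ‖z‖) A.card / A.card) * ∑ i ∈ A, |coord i x| } :=
  ⟨_, {0}, Finset.singleton_nonempty 0, rfl⟩

include hbasis huncond hbidem hM hC hC0

theorem Sfun_bddAbove (x : X) :
    BddAbove { r | ∃ A : Finset ℕ, A.Nonempty ∧
      r = (fundFn e (fun z => ‖z‖) A.card / A.card) * ∑ i ∈ A, |coord i x| } := by
  refine ⟨Δ * ‖x‖, ?_⟩
  rintro r ⟨A, hA, rfl⟩
  exact key_bound e coord Δ hbasis huncond hbidem hM hC hC0 x A hA

theorem Sfun_le (x : X) : Sfun e coord x ≤ Δ * ‖x‖ := by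
  unfold Sfun
  apply csSup_le (Sfun_nonempty e coord x)
  rintro r ⟨A, hA, rfl⟩
  exact key_bound e coord Δ hbasis huncond hbidem hM hC hC0 x A hA

theorem term_le_Sfun (x : X) (A : Finset ℕ) (hA : A.Nonempty) :
    (fundFn e (fun z => ‖z‖) A.card / A.card) * ∑ i ∈ A, |coord i x| ≤ Sfun e coord x :=
  le_csSup (Sfun_bddAbove e coord Δ hbasis huncond hbidem hM hC hC0 x) ⟨A, hA, rfl⟩

theorem Sfun_nonneg (x : X) : 0 ≤ Sfun e coord x := by
  have h := term_le_Sfun e coord Δ hbasis huncond hbidem hM hC hC0 x {0}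
    (Finset.singleton_nonempty 0)
  refine le_trans ?_ h
  have := phi_nonneg e hC hC0 ({0} : Finset ℕ).card
  positivity

theorem Sfun_add (x y : X) :
    Sfun e coord (x + y) ≤ Sfun e coord x + Sfun e coord y := by
  unfold Sfun
  apply csSup_le (Sfun_nonempty e coord _)
  rintro r ⟨A, hA, rfl⟩
  have hφ : 0 ≤ fundFn e (fun z => ‖z‖) A.card / A.card := by
    have := phi_nonneg e hC hC0 A.card
    positivity
  calc (fundFn e (fun z => ‖z‖) A.card / A.card) * ∑ i ∈ A, |coord i (x + y)|
      ≤ (fundFn e (fun z => ‖z‖) A.card / A.card) *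
        ((∑ i ∈ A, |coord i x|) + ∑ i ∈ A, |coord i y|) := by
        refine mul_le_mul_of_nonneg_left ?_ hφ
        rw [← Finset.sum_add_distrib]
        refine Finset.sum_le_sum fun i _ => ?_
        rw [map_add]
        exact abs_add_le _ _
    _ = (fundFn e (fun z => ‖z‖) A.card / A.card) * (∑ i ∈ A, |coord i x|) +
        (fundFn e (fun z => ‖z‖) A.card / A.card) * (∑ i ∈ A, |coord i y|) := by ring
    _ ≤ Sfun e coord x + Sfun e coord y :=
        add_le_add (term_le_Sfun e coord Δ hbasis huncond hbidem hM hC hC0 x A hA)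
          (term_le_Sfun e coord Δ hbasis huncond hbidem hM hC hC0 y A hA)

theorem Sfun_smul_le (a : ℝ) (x : X) :
    Sfun e coord (a • x) ≤ |a| * Sfun e coord x := by
  unfold Sfun
  apply csSup_le (Sfun_nonempty e coord _)
  rintro r ⟨A, hA, rfl⟩
  have hφ : 0 ≤ fundFn e (fun z => ‖z‖) A.card / A.card := by
    have := phi_nonneg e hC hC0 A.card
    positivity
  have h1 : ∑ i ∈ A, |coord i (a • x)| = |a| * ∑ i ∈ A, |coord i x| := by
    rw [Finset.mul_sum]
    refine Finset.sum_congr rfl fun i _ => ?_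
    rw [map_smul, smul_eq_mul, abs_mul]
  rw [h1]
  calc (fundFn e (fun z => ‖z‖) A.card / A.card) * (|a| * ∑ i ∈ A, |coord i x|)
      = |a| * ((fundFn e (fun z => ‖z‖) A.card / A.card) * ∑ i ∈ A, |coord i x|) := by ring
    _ ≤ |a| * Sfun e coord x :=
        mul_le_mul_of_nonneg_left
          (term_le_Sfun e coord Δ hbasis huncond hbidem hM hC hC0 x A hA) (abs_nonneg a)

theorem Sfun_smul (a : ℝ) (x : X) :
    Sfun e coord (a • x) = |a| * Sfun e coord x := by
  rcases eq_or_ne a 0 with rfl | ha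
  · simp only [zero_smul, abs_zero, zero_mul]
    refine le_antisymm ?_ (Sfun_nonneg e coord Δ hbasis huncond hbidem hM hC hC0 0)
    unfold Sfun
    apply csSup_le (Sfun_nonempty e coord _)
    rintro r ⟨A, hA, rfl⟩
    simp
  · refine le_antisymm (Sfun_smul_le e coord Δ hbasis huncond hbidem hM hC hC0 a x) ?_
    have h := Sfun_smul_le e coord Δ hbasis huncond hbidem hM hC hC0 a⁻¹ (a • x)
    rw [smul_smul, inv_mul_cancel₀ ha, one_smul] at h
    have h2 := mul_le_mul_of_nonneg_left h (abs_nonneg a)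
    rw [abs_inv] at h2
    calc |a| * Sfun e coord x ≤ |a| * (|a|⁻¹ * Sfun e coord (a • x)) := h2
      _ = Sfun e coord (a • x) := by
          field_simp

end SfunFacts

section TnFacts
variable [CompleteSpace X] (e : ℕ → X) (coord : ℕ → X →L[ℝ] ℝ) (Δ : ℝ)
variable (hbasis : IsSchauderBasis e coord)
variable (huncond : IsUnconditionalWith e (fun x => ‖x‖) 1)
variable (hbidem : IsBidemocraticWith e coord (fun x => ‖x‖) Δ)
variable {M : ℝ} (hM : ∀ i, ‖coord i‖ ≤ M)
variable {C : ℝ} (hC : ∀ i, ‖e i‖ ≤ C) (hC0 : 0 ≤ C)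
variable (tn : X → ℝ) (htn : ∀ x, tn x = max ‖x‖ (Sfun e coord x))

include hbasis huncond hbidem hM hC hC0 htn

theorem coord_finsum (s : Finset ℕ) (a : ℕ → ℝ) (j : ℕ) :
    coord j (∑ i ∈ s, a i • e i) = if j ∈ s then a j else 0 := by
  simp only [map_sum, map_smul, smul_eq_mul, hbasis.biorth, mul_ite, mul_one, mul_zero]
  exact Finset.sum_ite_eq s j a

theorem norm_le_tn (x : X) : ‖x‖ ≤ tn x := by rw [htn]; exact le_max_left _ _

theorem Sfun_le_tn (x : X) : Sfun e coord x ≤ tn x := by rw [htn]; exact le_max_right _ _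

theorem tn_nonneg (x : X) : 0 ≤ tn x := by
  rw [htn]
  exact (norm_nonneg x).trans (le_max_left _ _)

theorem tn_le_mul (hΔ : 1 ≤ Δ) (x : X) : tn x ≤ Δ * ‖x‖ := by
  rw [htn]
  apply max_le
  · nlinarith [norm_nonneg x]
  · exact Sfun_le e coord Δ hbasis huncond hbidem hM hC hC0 x

theorem tn_add (x y : X) : tn (x + y) ≤ tn x + tn y := by
  rw [htn, htn, htn]
  apply max_le
  · exact (norm_add_le x y).trans (add_le_add (le_max_left _ _) (le_max_left _ _))
  · exact (Sfun_add e coord Δ hbasis huncond hbidem hM hC hC0 x y).trans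
      (add_le_add (le_max_right _ _) (le_max_right _ _))

theorem tn_smul (a : ℝ) (x : X) : tn (a • x) = |a| * tn x := by
  rw [htn, htn, norm_smul, Sfun_smul e coord Δ hbasis huncond hbidem hM hC hC0 a x,
    Real.norm_eq_abs]
  exact (mul_max_of_nonneg _ _ (abs_nonneg a)).symm

theorem tn_zero : tn 0 = 0 := by
  have := tn_smul e coord Δ hbasis huncond hbidem hM hC hC0 tn htn 0 0
  simpa using this

theorem tn_tendsto (hΔ : 1 ≤ Δ) (u : ℕ → X) (x : X)
    (hu : Filter.Tendsto u Filter.atTop (nhds x)) :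
    Filter.Tendsto (fun n => tn (u n)) Filter.atTop (nhds (tn x)) := by
  have hlip : ∀ v w : X, tn v ≤ tn w + Δ * ‖v - w‖ := by
    intro v w
    have h1 : tn v ≤ tn w + tn (v - w) := by
      have := tn_add e coord Δ hbasis huncond hbidem hM hC hC0 tn htn w (v - w)
      simpa using this
    exact h1.trans (add_le_add_right
      (tn_le_mul e coord Δ hbasis huncond hbidem hM hC hC0 tn htn hΔ (v - w)) _)
  have hb : ∀ n, ‖tn (u n) - tn x‖ ≤ Δ * ‖u n - x‖ := by
    intro n
    rw [Real.norm_eq_abs, abs_sub_le_iff]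
    constructor
    · have := hlip (u n) x; linarith
    · have := hlip x (u n)
      rw [norm_sub_rev] at this
      linarith
  have h0 : Filter.Tendsto (fun n => Δ * ‖u n - x‖) Filter.atTop (nhds 0) := by
    have h1 : Filter.Tendsto (fun n => ‖u n - x‖) Filter.atTop (nhds 0) :=
      tendsto_iff_norm_sub_tendsto_zero.1 hu
    have := h1.const_mul Δ
    simpa using this
  have hsq := squeeze_zero_norm hb h0
  have := hsq.add (tendsto_const_nhds (x := tn x))
  simpa using this

theorem tn_uncond (s : Finset ℕ) (a b : ℕ → ℝ) (hab : ∀ i, |a i| ≤ |b i|) :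
    tn (∑ i ∈ s, a i • e i) ≤ tn (∑ i ∈ s, b i • e i) := by
  rw [htn, htn]
  apply max_le
  · have := huncond s a b hab
    simp only [one_mul] at this
    exact this.trans (le_max_left _ _)
  · refine le_trans ?_ (le_max_right _ _)
    unfold Sfun
    apply csSup_le (Sfun_nonempty e coord _)
    rintro r ⟨A, hA, rfl⟩
    have hφ : 0 ≤ fundFn e (fun z => ‖z‖) A.card / A.card := by
      have := phi_nonneg e hC hC0 A.card
      positivity
    have hterm : ∑ i ∈ A, |coord i (∑ j ∈ s, a j • e j)| ≤
        ∑ i ∈ A, |coord i (∑ j ∈ s, b j • e j)| := by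
      refine Finset.sum_le_sum fun i _ => ?_
      rw [coord_finsum e coord Δ hbasis huncond hbidem hM hC hC0 tn htn s a i,
        coord_finsum e coord Δ hbasis huncond hbidem hM hC hC0 tn htn s b i]
      by_cases h : i ∈ s
      · simpa [h] using hab i
      · simp [h]
    calc (fundFn e (fun z => ‖z‖) A.card / A.card) * ∑ i ∈ A, |coord i (∑ j ∈ s, a j • e j)|
        ≤ (fundFn e (fun z => ‖z‖) A.card / A.card) *
            ∑ i ∈ A, |coord i (∑ j ∈ s, b j • e j)| := mul_le_mul_of_nonneg_left hterm hφ
      _ ≤ Sfun e coord (∑ j ∈ s, b j • e j) :=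
          term_le_Sfun e coord Δ hbasis huncond hbidem hM hC hC0 _ A hA

theorem sum_abs_coord_indicator (A B : Finset ℕ) :
    ∑ i ∈ B, |coord i (∑ j ∈ A, e j)| = ((B.filter (fun i => i ∈ A)).card : ℝ) := by
  have he : ∑ j ∈ A, e j = ∑ j ∈ A, (1:ℝ) • e j := by simp
  rw [he]
  calc ∑ i ∈ B, |coord i (∑ j ∈ A, (1:ℝ) • e j)|
      = ∑ i ∈ B, (if i ∈ A then (1:ℝ) else 0) := by
        refine Finset.sum_congr rfl fun i _ => ?_
        rw [coord_finsum e coord Δ hbasis huncond hbidem hM hC hC0 tn htn A (fun _ => (1:ℝ)) i]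
        by_cases h : i ∈ A <;> simp [h]
    _ = ((B.filter (fun i => i ∈ A)).card : ℝ) := by
        rw [Finset.sum_boole]

theorem tn_indicator (A : Finset ℕ) (hA : A.Nonempty) :
    tn (∑ i ∈ A, e i) = fundFn e (fun z => ‖z‖) A.card := by
  have hn1 : 1 ≤ A.card := Finset.card_pos.2 hA
  have hnR : (0:ℝ) < A.card := by exact_mod_cast Finset.card_pos.2 hA
  apply le_antisymm
  · rw [htn]
    apply max_le
    · exact norm_sum_le_phi e hC hC0 le_rfl
    · unfold Sfun
      apply csSup_le (Sfun_nonempty e coord _)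
      rintro r ⟨B, hB, rfl⟩
      rw [sum_abs_coord_indicator e coord Δ hbasis huncond hbidem hM hC hC0 tn htn A B]
      set j := (B.filter (fun i => i ∈ A)).card with hj
      have hjm : j ≤ B.card := Finset.card_filter_le _ _
      have hjn : j ≤ A.card := by
        refine Finset.card_le_card fun i hi => ?_
        exact (Finset.mem_filter.1 hi).2
      have hm1 : 1 ≤ B.card := Finset.card_pos.2 hB
      have hmR : (0:ℝ) < B.card := by exact_mod_cast Finset.card_pos.2 hB
      rw [div_mul_eq_mul_div, div_le_iff₀ hmR]
      rcases le_or_gt B.card A.card with hcase | hcase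
      · refine mul_le_mul (phi_mono e hC hC0 hcase) ?_ (by positivity)
          (phi_nonneg e hC hC0 _)
        exact_mod_cast hjm
      · have hq := phi_quasi e hC hC0 hn1 hcase.le
        calc fundFn e (fun z => ‖z‖) B.card * j
            ≤ fundFn e (fun z => ‖z‖) B.card * A.card := by
              refine mul_le_mul_of_nonneg_left ?_ (phi_nonneg e hC hC0 _)
              exact_mod_cast hjn
          _ = (A.card : ℝ) * fundFn e (fun z => ‖z‖) B.card := mul_comm _ _
          _ ≤ (B.card : ℝ) * fundFn e (fun z => ‖z‖) A.card := hq
          _ = fundFn e (fun z => ‖z‖) A.card * B.card := mul_comm _ _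
  · have hterm := term_le_Sfun e coord Δ hbasis huncond hbidem hM hC hC0
      (∑ i ∈ A, e i) A hA
    rw [sum_abs_coord_indicator e coord Δ hbasis huncond hbidem hM hC hC0 tn htn A A] at hterm
    have hAA : (A.filter (fun i => i ∈ A)).card = A.card := by
      congr 1
      exact Finset.filter_true_of_mem fun i hi => hi
    rw [hAA] at hterm
    have heq : fundFn e (fun z => ‖z‖) A.card / A.card * A.card =
        fundFn e (fun z => ‖z‖) A.card := by field_simp
    rw [heq] at hterm
    exact hterm.trans (Sfun_le_tn e coord Δ hbasis huncond hbidem hM hC hC0 tn htn _)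

theorem tn_indicator_le (A : Finset ℕ) (n : ℕ) (hAn : A.card ≤ n) :
    tn (∑ i ∈ A, e i) ≤ fundFn e (fun z => ‖z‖) n := by
  rcases Finset.eq_empty_or_nonempty A with rfl | hA
  · simp only [Finset.sum_empty]
    rw [tn_zero e coord Δ hbasis huncond hbidem hM hC hC0 tn htn]
    exact phi_nonneg e hC hC0 n
  · rw [tn_indicator e coord Δ hbasis huncond hbidem hM hC hC0 tn htn A hA]
    exact phi_mono e hC hC0 hAn

end TnFacts


section TnFacts2
variable [CompleteSpace X] (e : ℕ → X) (coord : ℕ → X →L[ℝ] ℝ) (Δ : ℝ)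
variable (hbasis : IsSchauderBasis e coord)
variable (huncond : IsUnconditionalWith e (fun x => ‖x‖) 1)
variable (hbidem : IsBidemocraticWith e coord (fun x => ‖x‖) Δ)
variable {M : ℝ} (hM : ∀ i, ‖coord i‖ ≤ M)
variable {c C : ℝ} (hc : 0 < c) (hce : ∀ i, c ≤ ‖e i‖) (hC : ∀ i, ‖e i‖ ≤ C) (hC0 : 0 ≤ C)
variable (tn : X → ℝ) (htn : ∀ x, tn x = max ‖x‖ (Sfun e coord x))

include hbasis huncond hbidem hM hc hce hC hC0 htn

theorem dualTn_bddAbove (A : Finset ℕ) :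
    BddAbove { r | ∃ x : X, tn x ≤ 1 ∧ r = |∑ i ∈ A, coord i x| } :=
  dualNormFinset_bddAbove coord hM tn
    (fun x hx => (norm_le_tn e coord Δ hbasis huncond hbidem hM hC hC0 tn htn x).trans hx) A

theorem tn_zero_le_one : tn (0:X) ≤ 1 := by
  rw [tn_zero e coord Δ hbasis huncond hbidem hM hC hC0 tn htn]
  norm_num

theorem dualTn_nonneg (A : Finset ℕ) : 0 ≤ dualNormFinset coord tn A :=
  dualNormFinset_nonneg coord tn
    (tn_zero_le_one e coord Δ hbasis huncond hbidem hM hc hce hC hC0 tn htn) A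
    (dualTn_bddAbove e coord Δ hbasis huncond hbidem hM hc hce hC hC0 tn htn A)

theorem dualTn_empty : dualNormFinset coord tn (∅ : Finset ℕ) = 0 := by
  refine le_antisymm ?_
    (dualTn_nonneg e coord Δ hbasis huncond hbidem hM hc hce hC hC0 tn htn ∅)
  unfold dualNormFinset
  refine csSup_le ?_ ?_
  · exact ⟨0, 0, tn_zero_le_one e coord Δ hbasis huncond hbidem hM hc hce hC hC0 tn htn,
      by simp⟩
  · rintro r ⟨x, hx, rfl⟩
    simp

theorem dualTn_eq (A : Finset ℕ) (hA : A.Nonempty) :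
    dualNormFinset coord tn A = A.card / fundFn e (fun z => ‖z‖) A.card := by
  have hn1 : 1 ≤ A.card := Finset.card_pos.2 hA
  have hnR : (0:ℝ) < A.card := by exact_mod_cast Finset.card_pos.2 hA
  have hφpos : 0 < fundFn e (fun z => ‖z‖) A.card := phi_pos e hc hce hC hC0 hn1
  apply le_antisymm
  · unfold dualNormFinset
    refine csSup_le ?_ ?_
    · exact ⟨0, 0, tn_zero_le_one e coord Δ hbasis huncond hbidem hM hc hce hC hC0 tn htn,
        by simp⟩
    · rintro r ⟨x, hx, rfl⟩
      have h1 : fundFn e (fun z => ‖z‖) A.card / A.card * ∑ i ∈ A, |coord i x| ≤ 1 :=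
        le_trans (le_trans
          (term_le_Sfun e coord Δ hbasis huncond hbidem hM hC hC0 x A hA)
          (Sfun_le_tn e coord Δ hbasis huncond hbidem hM hC hC0 tn htn x)) hx
      have h2 : ∑ i ∈ A, |coord i x| ≤ A.card / fundFn e (fun z => ‖z‖) A.card := by
        rw [le_div_iff₀ hφpos]
        have h3 := mul_le_mul_of_nonneg_left h1 hnR.le
        rw [mul_one] at h3
        calc (∑ i ∈ A, |coord i x|) * fundFn e (fun z => ‖z‖) A.card
            = (A.card : ℝ) * (fundFn e (fun z => ‖z‖) A.card / A.card *
                ∑ i ∈ A, |coord i x|) := by field_simp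
          _ ≤ A.card := h3
      exact (Finset.abs_sum_le_sum_abs _ _).trans h2
  · have hval : |∑ i ∈ A, coord i ((fundFn e (fun z => ‖z‖) A.card)⁻¹ • ∑ j ∈ A, e j)| =
        A.card / fundFn e (fun z => ‖z‖) A.card := by
      have h4 : ∀ i ∈ A, coord i ((fundFn e (fun z => ‖z‖) A.card)⁻¹ • ∑ j ∈ A, e j) =
          (fundFn e (fun z => ‖z‖) A.card)⁻¹ := by
        intro i hi
        rw [map_smul, smul_eq_mul]
        have he : ∑ j ∈ A, e j = ∑ j ∈ A, (1:ℝ) • e j := by simp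
        rw [he, coord_finsum e coord Δ hbasis huncond hbidem hM hC hC0 tn htn A
          (fun _ => (1:ℝ)) i, if_pos hi, mul_one]
      rw [Finset.sum_congr rfl h4, Finset.sum_const, nsmul_eq_mul,
        abs_of_nonneg (by positivity), div_eq_mul_inv]
    have hmem : A.card / fundFn e (fun z => ‖z‖) A.card ∈
        { r | ∃ x : X, tn x ≤ 1 ∧ r = |∑ i ∈ A, coord i x| } := by
      refine ⟨(fundFn e (fun z => ‖z‖) A.card)⁻¹ • ∑ j ∈ A, e j, ?_, hval.symm⟩
      rw [tn_smul e coord Δ hbasis huncond hbidem hM hC hC0 tn htn,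
        tn_indicator e coord Δ hbasis huncond hbidem hM hC hC0 tn htn A hA,
        abs_of_nonneg (by positivity : (0:ℝ) ≤ (fundFn e (fun z => ‖z‖) A.card)⁻¹),
        inv_mul_cancel₀ (ne_of_gt hφpos)]
    exact le_csSup
      (dualTn_bddAbove e coord Δ hbasis huncond hbidem hM hc hce hC hC0 tn htn A) hmem

theorem tnfund_zero : fundFn e tn 0 = 0 := by
  unfold fundFn
  have hz := tn_zero e coord Δ hbasis huncond hbidem hM hC hC0 tn htn
  apply le_antisymm
  · refine csSup_le ?_ ?_
    · exact ⟨tn (∑ i ∈ (∅:Finset ℕ), e i), ∅, by simp, rfl⟩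
    · rintro r ⟨A, hA, rfl⟩
      rw [Finset.card_eq_zero.1 (Nat.le_zero.1 hA)]
      simp [hz]
  · refine le_csSup ⟨0, ?_⟩ ⟨∅, by simp, by simp [hz]⟩
    rintro r ⟨A, hA, rfl⟩
    rw [Finset.card_eq_zero.1 (Nat.le_zero.1 hA)]
    simp [hz]

theorem tnfund_le (n : ℕ) : fundFn e tn n ≤ fundFn e (fun z => ‖z‖) n := by
  unfold fundFn
  refine csSup_le ?_ ?_
  · exact ⟨tn (∑ i ∈ (∅:Finset ℕ), e i), ∅, by simp, rfl⟩
  · rintro r ⟨A, hA, rfl⟩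
    exact tn_indicator_le e coord Δ hbasis huncond hbidem hM hC hC0 tn htn A n hA

theorem tnfund_nonneg (n : ℕ) : 0 ≤ fundFn e tn n := by
  have hbdd : BddAbove { r | ∃ A : Finset ℕ, A.card ≤ n ∧ r = tn (∑ i ∈ A, e i) } := by
    refine ⟨fundFn e (fun z => ‖z‖) n, ?_⟩
    rintro r ⟨A, hA, rfl⟩
    exact tn_indicator_le e coord Δ hbasis huncond hbidem hM hC hC0 tn htn A n hA
  have h0 : tn (∑ i ∈ (∅:Finset ℕ), e i) ∈
      { r | ∃ A : Finset ℕ, A.card ≤ n ∧ r = tn (∑ i ∈ A, e i) } := ⟨∅, by simp, rfl⟩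
  have := le_csSup hbdd h0
  unfold fundFn
  refine le_trans ?_ this
  simp only [Finset.sum_empty]
  rw [tn_zero e coord Δ hbasis huncond hbidem hM hC hC0 tn htn]

theorem tndualfund_bddAbove (n : ℕ) :
    BddAbove { r | ∃ A : Finset ℕ, A.card ≤ n ∧ r = dualNormFinset coord tn A } := by
  refine ⟨n * max M 0, ?_⟩
  rintro r ⟨B, hB, rfl⟩
  calc dualNormFinset coord tn B ≤ B.card * max M 0 :=
        dualNormFinset_le_mul coord (fun i => (hM i).trans (le_max_left _ _)) tn
          (fun x hx => (norm_le_tn e coord Δ hbasis huncond hbidem hM hC hC0 tn htn x).trans hx)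
          (tn_zero_le_one e coord Δ hbasis huncond hbidem hM hc hce hC hC0 tn htn) B
    _ ≤ n * max M 0 := by
        refine mul_le_mul_of_nonneg_right ?_ (le_max_right _ _)
        exact_mod_cast hB

theorem tndualfund_nonneg (n : ℕ) : 0 ≤ dualFundFn coord tn n := by
  unfold dualFundFn
  refine le_trans ?_ (le_csSup (tndualfund_bddAbove e coord Δ hbasis huncond hbidem hM hc hce
    hC hC0 tn htn n) ⟨∅, by simp, rfl⟩)
  rw [dualTn_empty e coord Δ hbasis huncond hbidem hM hc hce hC hC0 tn htn]

theorem tndualfund_le (n : ℕ) (hn : 1 ≤ n) :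
    dualFundFn coord tn n ≤ n / fundFn e (fun z => ‖z‖) n := by
  have hφn : 0 < fundFn e (fun z => ‖z‖) n := phi_pos e hc hce hC hC0 hn
  unfold dualFundFn
  refine csSup_le ?_ ?_
  · exact ⟨dualNormFinset coord tn ∅, ∅, by simp, rfl⟩
  · rintro r ⟨B, hB, rfl⟩
    rcases Finset.eq_empty_or_nonempty B with rfl | hBne
    · rw [dualTn_empty e coord Δ hbasis huncond hbidem hM hc hce hC hC0 tn htn]
      positivity
    · rw [dualTn_eq e coord Δ hbasis huncond hbidem hM hc hce hC hC0 tn htn B hBne]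
      have hb1 : 1 ≤ B.card := Finset.card_pos.2 hBne
      have hφb : 0 < fundFn e (fun z => ‖z‖) B.card := phi_pos e hc hce hC hC0 hb1
      rw [div_le_div_iff₀ hφb hφn]
      have := phi_quasi e hC hC0 hb1 hB
      exact this

theorem tn_suppress (hΔ : 1 ≤ Δ) (x : X) (Cs : Finset ℕ) :
    tn (x - ∑ i ∈ Cs, coord i x • e i) ≤ tn x := by
  classical
  have h1 : ∀ n : ℕ, tn (∑ i ∈ (Finset.range n).filter (fun i => i ∉ Cs), coord i x • e i)
      ≤ tn (∑ i ∈ Finset.range n, coord i x • e i) := by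
    intro n
    have he : ∑ i ∈ (Finset.range n).filter (fun i => i ∉ Cs), coord i x • e i
        = ∑ i ∈ Finset.range n, (if i ∈ Cs then 0 else coord i x) • e i := by
      simp only [ite_smul, zero_smul]
      rw [Finset.sum_ite, Finset.sum_const_zero, zero_add]
    rw [he]
    exact tn_uncond e coord Δ hbasis huncond hbidem hM hC hC0 tn htn (Finset.range n)
      (fun i => if i ∈ Cs then 0 else coord i x) (fun i => coord i x)
      (fun i => by by_cases h : i ∈ Cs <;> simp [h, abs_nonneg])
  have h2 : ∀ n : ℕ, Cs ⊆ Finset.range n →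
      ∑ i ∈ (Finset.range n).filter (fun i => i ∉ Cs), coord i x • e i
        = (∑ i ∈ Finset.range n, coord i x • e i) - ∑ i ∈ Cs, coord i x • e i := by
    intro n hsub
    have hfil : (Finset.range n).filter (fun i => i ∈ Cs) = Cs := by
      rw [Finset.filter_mem_eq_inter, Finset.inter_eq_right.2 hsub]
    have hsplit := Finset.sum_filter_add_sum_filter_not (Finset.range n)
      (fun i => i ∈ Cs) (fun i => coord i x • e i)
    rw [hfil] at hsplit
    rw [← hsplit]
    abel
  have h3 : Filter.Tendsto
      (fun n => ∑ i ∈ (Finset.range n).filter (fun i => i ∉ Cs), coord i x • e i)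
      Filter.atTop (nhds (x - ∑ i ∈ Cs, coord i x • e i)) := by
    refine Filter.Tendsto.congr' ?_ ((hbasis.expansion x).sub tendsto_const_nhds)
    filter_upwards [Filter.eventually_ge_atTop (Cs.sup id + 1)] with n hn
    have hsub : Cs ⊆ Finset.range n := by
      intro i hi
      exact Finset.mem_range.2
        (lt_of_lt_of_le (Nat.lt_succ_of_le (Finset.le_sup (f := id) hi)) hn)
    exact (h2 n hsub).symm
  exact le_of_tendsto_of_tendsto'
    (tn_tendsto e coord Δ hbasis huncond hbidem hM hC hC0 tn htn hΔ _ _ h3)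
    (tn_tendsto e coord Δ hbasis huncond hbidem hM hC hC0 tn htn hΔ _ x (hbasis.expansion x))
    h1

theorem tn_greedy_step (hΔ : 1 ≤ Δ) (x : X) (A B : Finset ℕ) (b : ℕ → ℝ)
    (hg : GreedySet coord x A) (hBA : B.card ≤ A.card) :
    tn (x - ∑ i ∈ A, coord i x • e i) ≤ 2 * tn (x - ∑ i ∈ B, b i • e i) := by
  classical
  set z := ∑ i ∈ B, b i • e i with hz
  have hcz : ∀ j, coord j z = if j ∈ B then b j else 0 := fun j =>
    coord_finsum e coord Δ hbasis huncond hbidem hM hC hC0 tn htn B b j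
  have hPz : ∑ i ∈ A ∪ B, coord i z • e i = z := by
    calc ∑ i ∈ A ∪ B, coord i z • e i
        = ∑ i ∈ A ∪ B, (if i ∈ B then b i else 0) • e i :=
          Finset.sum_congr rfl fun i _ => by rw [hcz i]
      _ = ∑ i ∈ (A ∪ B).filter (fun i => i ∈ B), b i • e i := by
          simp only [ite_smul, zero_smul]
          rw [Finset.sum_ite, Finset.sum_const_zero, add_zero]
      _ = z := by
          rw [Finset.filter_mem_eq_inter, Finset.inter_eq_right.2 Finset.subset_union_right, hz]
  have hkey1 : x - ∑ i ∈ A ∪ B, coord i x • e i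
      = (x - z) - ∑ i ∈ A ∪ B, coord i (x - z) • e i := by
    have hsplit : ∑ i ∈ A ∪ B, coord i (x - z) • e i
        = (∑ i ∈ A ∪ B, coord i x • e i) - ∑ i ∈ A ∪ B, coord i z • e i := by
      rw [← Finset.sum_sub_distrib]
      exact Finset.sum_congr rfl fun i _ => by rw [map_sub, sub_smul]
    rw [hsplit, hPz]
    abel
  have h1 : tn (x - ∑ i ∈ A ∪ B, coord i x • e i) ≤ tn (x - z) := by
    rw [hkey1]
    exact tn_suppress e coord Δ hbasis huncond hbidem hM hc hce hC hC0 tn htn hΔ (x - z) (A ∪ B)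
  have hdecomp : x - ∑ i ∈ A, coord i x • e i
      = (x - ∑ i ∈ A ∪ B, coord i x • e i) + ∑ i ∈ B \ A, coord i x • e i := by
    have hu : ∑ i ∈ A ∪ B, coord i x • e i
        = (∑ i ∈ A, coord i x • e i) + ∑ i ∈ B \ A, coord i x • e i := by
      rw [← Finset.sum_union Finset.disjoint_sdiff, Finset.union_sdiff_self_eq_union]
    rw [hu]
    abel
  have h2 : tn (∑ i ∈ B \ A, coord i x • e i) ≤ tn (x - z) := by
    rcases Finset.eq_empty_or_nonempty (B \ A) with hBA0 | hBAne
    · rw [hBA0, Finset.sum_empty, tn_zero e coord Δ hbasis huncond hbidem hM hC hC0 tn htn]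
      exact tn_nonneg e coord Δ hbasis huncond hbidem hM hC hC0 tn htn (x - z)
    · have hABne : (A \ B).Nonempty := by
        rcases Finset.eq_empty_or_nonempty (A \ B) with hAB0 | h
        · exfalso
          have hsub : A ⊆ B := Finset.sdiff_eq_empty_iff_subset.1 hAB0
          have : A = B := Finset.eq_of_subset_of_card_le hsub hBA
          rw [this] at hBAne
          simp at hBAne
        · exact h
      obtain ⟨j₀, hj₀mem, hj₀min⟩ :=
        Finset.exists_min_image (A \ B) (fun j => |coord j x|) hABne
      set α := |coord j₀ x| with hα
      have hbound : ∀ i ∈ B \ A, |coord i x| ≤ α := by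
        intro i hi
        exact hg j₀ (Finset.mem_sdiff.1 hj₀mem).1 i (Finset.mem_sdiff.1 hi).2
      have ha : tn (∑ i ∈ B \ A, coord i x • e i) ≤ tn (∑ i ∈ B \ A, α • e i) := by
        have e1 : ∑ i ∈ B \ A, coord i x • e i
            = ∑ i ∈ B \ A, (if i ∈ B \ A then coord i x else 0) • e i :=
          Finset.sum_congr rfl fun i hi => by rw [if_pos hi]
        have e2 : ∑ i ∈ B \ A, α • e i
            = ∑ i ∈ B \ A, (if i ∈ B \ A then α else 0) • e i :=
          Finset.sum_congr rfl fun i hi => by rw [if_pos hi]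
        rw [e1, e2]
        refine tn_uncond e coord Δ hbasis huncond hbidem hM hC hC0 tn htn (B \ A) _ _ fun i => ?_
        by_cases h : i ∈ B \ A
        · simp only [if_pos h]
          exact (hbound i h).trans_eq (abs_abs _).symm
        · simp [h]
      have hb : tn (∑ i ∈ B \ A, α • e i) = α * fundFn e (fun w => ‖w‖) (B \ A).card := by
        rw [← Finset.smul_sum, tn_smul e coord Δ hbasis huncond hbidem hM hC hC0 tn htn,
          tn_indicator e coord Δ hbasis huncond hbidem hM hC hC0 tn htn (B \ A) hBAne,
          abs_abs]
      have hcard : (B \ A).card ≤ (A \ B).card := by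
        have h1' := Finset.card_sdiff_add_card_inter B A
        have h2' := Finset.card_sdiff_add_card_inter A B
        rw [Finset.inter_comm B A] at h1'
        omega
      have hk1 : 1 ≤ (A \ B).card := Finset.card_pos.2 hABne
      have hkR : (0:ℝ) < (A \ B).card := by exact_mod_cast Finset.card_pos.2 hABne
      have hφnn := phi_nonneg e hC hC0 (A \ B).card
      have hcd : ∀ j ∈ A \ B, coord j (x - z) = coord j x := by
        intro j hj
        rw [map_sub, hcz j, if_neg (Finset.mem_sdiff.1 hj).2, sub_zero]
      have hαk : α * (A \ B).card ≤ ∑ j ∈ A \ B, |coord j (x - z)| := by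
        calc α * (A \ B).card = ∑ j ∈ A \ B, α := by
              rw [Finset.sum_const, nsmul_eq_mul]; ring
          _ ≤ ∑ j ∈ A \ B, |coord j (x - z)| := by
              refine Finset.sum_le_sum fun j hj => ?_
              rw [hcd j hj]
              exact hj₀min j hj
      have hstepd : α * fundFn e (fun w => ‖w‖) (A \ B).card ≤
          fundFn e (fun w => ‖w‖) (A \ B).card / (A \ B).card *
            ∑ j ∈ A \ B, |coord j (x - z)| := by
        rw [div_mul_eq_mul_div, le_div_iff₀ hkR]
        nlinarith [mul_le_mul_of_nonneg_left hαk hφnn]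
      calc tn (∑ i ∈ B \ A, coord i x • e i)
          ≤ α * fundFn e (fun w => ‖w‖) (B \ A).card := by rw [← hb]; exact ha
        _ ≤ α * fundFn e (fun w => ‖w‖) (A \ B).card :=
            mul_le_mul_of_nonneg_left (phi_mono e hC hC0 hcard) (abs_nonneg _)
        _ ≤ fundFn e (fun w => ‖w‖) (A \ B).card / (A \ B).card *
              ∑ j ∈ A \ B, |coord j (x - z)| := hstepd
        _ ≤ Sfun e coord (x - z) :=
            term_le_Sfun e coord Δ hbasis huncond hbidem hM hC hC0 (x - z) (A \ B) hABne
        _ ≤ tn (x - z) := Sfun_le_tn e coord Δ hbasis huncond hbidem hM hC hC0 tn htn (x - z)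
  calc tn (x - ∑ i ∈ A, coord i x • e i)
      = tn ((x - ∑ i ∈ A ∪ B, coord i x • e i) + ∑ i ∈ B \ A, coord i x • e i) := by
        rw [← hdecomp]
    _ ≤ tn (x - ∑ i ∈ A ∪ B, coord i x • e i) + tn (∑ i ∈ B \ A, coord i x • e i) :=
        tn_add e coord Δ hbasis huncond hbidem hM hC hC0 tn htn _ _
    _ ≤ tn (x - z) + tn (x - z) := add_le_add h1 h2
    _ = 2 * tn (x - z) := by ring

end TnFacts2


end Aux3

/-- if `(e_i)` is a `1`-unconditional, `Δ`-bidemocratic (seminormalized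
Schauder) basis of a Banach space `X` with fundamental function `φ`, then
`|||x||| = max {‖x‖, sup_A (φ(|A|)/|A|) Σ_{i∈A} |e_i^*(x)|}` is an equivalent norm on `X`
w.r.t. which `(e_i)` is `1`-unconditional and `1`-bidemocratic; in particular `(e_i)` and
`(e_i^*)` are `1`-democratic and `(e_i)` is `2`-greedy. -/
theorem bidemocratic_renorming
    {X : Type*} [NormedAddCommGroup X] [NormedSpace ℝ X] [CompleteSpace X]
    (e : ℕ → X) (coord : ℕ → X →L[ℝ] ℝ) (Δ : ℝ) (hΔ : 1 ≤ Δ)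
    (hbasis : IsSchauderBasis e coord)
    (hsemi : IsSeminormalized e)
    (huncond : IsUnconditionalWith e (fun x => ‖x‖) 1)
    (hbidem : IsBidemocraticWith e coord (fun x => ‖x‖) Δ)
    (tn : X → ℝ)
    (htn : ∀ x : X, tn x = max ‖x‖ (sSup { r | ∃ A : Finset ℕ, A.Nonempty ∧
      r = (fundFn e (fun z => ‖z‖) A.card / A.card) * ∑ i ∈ A, |coord i x| })) :
    IsEquivNorm tn ∧
    IsUnconditionalWith e tn 1 ∧
    IsBidemocraticWith e coord tn 1 ∧
    IsDemocraticWith e tn 1 ∧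
    (∀ A B : Finset ℕ, A.card ≤ B.card →
      dualNormFinset coord tn A ≤ dualNormFinset coord tn B) ∧
    IsGreedyWith e coord tn 2 := by
  classical
  obtain ⟨c, C, hc, hceC⟩ := hsemi
  have hce : ∀ i, c ≤ ‖e i‖ := fun i => (hceC i).1
  have hC : ∀ i, ‖e i‖ ≤ C := fun i => (hceC i).2
  have hC0 : (0:ℝ) ≤ C := (norm_nonneg (e 0)).trans (hC 0)
  obtain ⟨M, hM0, hM⟩ := coord_bound e coord hbasis hc hceC
  have htn' : ∀ x : X, tn x = max ‖x‖ (Sfun e coord x) := htn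
  refine ⟨?_, ?_, ?_, ?_, ?_, ?_⟩
  -- 1. equivalent norm
  · refine ⟨tn_add e coord Δ hbasis huncond hbidem hM hC hC0 tn htn',
      tn_smul e coord Δ hbasis huncond hbidem hM hC hC0 tn htn', 1, Δ, one_pos, fun x => ?_⟩
    constructor
    · rw [one_mul]
      exact norm_le_tn e coord Δ hbasis huncond hbidem hM hC hC0 tn htn' x
    · exact tn_le_mul e coord Δ hbasis huncond hbidem hM hC hC0 tn htn' hΔ x
  -- 2. 1-unconditional
  · intro s a b hab
    rw [one_mul]
    exact tn_uncond e coord Δ hbasis huncond hbidem hM hC hC0 tn htn' s a b hab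
  -- 3. 1-bidemocratic
  · intro n
    rcases Nat.eq_zero_or_pos n with rfl | hn
    · rw [tnfund_zero e coord Δ hbasis huncond hbidem hM hc hce hC hC0 tn htn']
      simp
    · have h1 := tnfund_le e coord Δ hbasis huncond hbidem hM hc hce hC hC0 tn htn' n
      have h2 := tndualfund_le e coord Δ hbasis huncond hbidem hM hc hce hC hC0 tn htn' n hn
      have h3 := tndualfund_nonneg e coord Δ hbasis huncond hbidem hM hc hce hC hC0 tn htn' n
      have h4 := phi_nonneg e hC hC0 n
      have hφpos := phi_pos e hc hce hC hC0 hn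
      calc fundFn e tn n * dualFundFn coord tn n
          ≤ fundFn e (fun z => ‖z‖) n * (n / fundFn e (fun z => ‖z‖) n) :=
            mul_le_mul h1 h2 h3 h4
        _ = (n : ℝ) := by field_simp
        _ = 1 * n := (one_mul _).symm
  -- 4. 1-democratic
  · intro A B hAB
    rw [one_mul]
    rcases Finset.eq_empty_or_nonempty A with rfl | hA
    · simp only [Finset.sum_empty]
      rw [tn_zero e coord Δ hbasis huncond hbidem hM hC hC0 tn htn']
      exact tn_nonneg e coord Δ hbasis huncond hbidem hM hC hC0 tn htn' _
    · have hB : B.Nonempty := by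
        rw [← Finset.card_pos]
        exact lt_of_lt_of_le (Finset.card_pos.2 hA) hAB
      rw [tn_indicator e coord Δ hbasis huncond hbidem hM hC hC0 tn htn' A hA,
        tn_indicator e coord Δ hbasis huncond hbidem hM hC hC0 tn htn' B hB]
      exact phi_mono e hC hC0 hAB
  -- 5. dual democratic
  · intro A B hAB
    rcases Finset.eq_empty_or_nonempty A with rfl | hA
    · rw [dualTn_empty e coord Δ hbasis huncond hbidem hM hc hce hC hC0 tn htn']
      exact dualTn_nonneg e coord Δ hbasis huncond hbidem hM hc hce hC hC0 tn htn' B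
    · have hB : B.Nonempty := by
        rw [← Finset.card_pos]
        exact lt_of_lt_of_le (Finset.card_pos.2 hA) hAB
      rw [dualTn_eq e coord Δ hbasis huncond hbidem hM hc hce hC hC0 tn htn' A hA,
        dualTn_eq e coord Δ hbasis huncond hbidem hM hc hce hC hC0 tn htn' B hB]
      have ha1 : 1 ≤ A.card := Finset.card_pos.2 hA
      have hφa := phi_pos e hc hce hC hC0 ha1
      have hφb := phi_pos e hc hce hC hC0 (Finset.card_pos.2 hB)
      rw [div_le_div_iff₀ hφa hφb]
      exact phi_quasi e hC hC0 ha1 hAB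
  -- 6. 2-greedy
  · intro x m A hcard hg
    have hset_ne : Set.Nonempty { r | ∃ (B : Finset ℕ) (a : ℕ → ℝ), B.card ≤ m ∧
        r = tn (x - ∑ i ∈ B, a i • e i) } := by
      refine ⟨tn (x - ∑ i ∈ (∅ : Finset ℕ), (fun _ => (0:ℝ)) i • e i), ∅, fun _ => 0, ?_, rfl⟩
      simp
    have hlb : ∀ r ∈ { r | ∃ (B : Finset ℕ) (a : ℕ → ℝ), B.card ≤ m ∧
        r = tn (x - ∑ i ∈ B, a i • e i) },
        tn (x - ∑ i ∈ A, coord i x • e i) / 2 ≤ r := by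
      rintro r ⟨B, a, hBm, rfl⟩
      have := tn_greedy_step e coord Δ hbasis huncond hbidem hM hc hce hC hC0 tn htn' hΔ
        x A B a hg (by omega)
      linarith
    have hinf := le_csInf hset_ne hlb
    unfold bestApprox
    linarith
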